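/- Let Σ be a nonempty finite type, D a complete lattice, and p : (ℕ → Σ) → D a quantitative property. Then p is co-continuous, i.e., for every infinite trace f one has p f = ⨆ n, ⨅ g : ℕ → Σ, p ((f↾n)·g), if and only if there exists a prefix-monotone verdict function v : List Σ → D (for all finite traces s, t, if s is a prefix of t then v s ≤ v t) such that for every infinite trace f, ⨆ n, v (f↾n) = p f. -/

import Mathlib

/-- The length-`n` prefix of an infinite trace `f`. -/
def pref {A : Type*} (f : ℕ → A) (n : ℕ) : List A := List.ofFn (fun i : Fin n => f i.1)

/-- The infinite trace obtained by prepending the finite trace `s` to the infinite trace `f`. -/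
def ext {A : Type*} (s : List A) (f : ℕ → A) : ℕ → A :=
  fun n => if h : n < s.length then s.get ⟨n, h⟩ else f (n - s.length)

lemma ext_append {A : Type*} (s u : List A) (g : ℕ → A) :
    ext (s ++ u) g = ext s (ext u g) := by
  funext n
  simp only [ext, List.length_append]
  by_cases h1 : n < s.length
  · rw [dif_pos (by omega), dif_pos h1]; simp [List.getElem_append_left h1]
  · rw [dif_neg h1]
    by_cases h2 : n < s.length + u.length
    · rw [dif_pos h2, dif_pos (by omega)]
      simp only [List.get_eq_getElem]
      rw [List.getElem_append_right (by omega)]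
    · rw [dif_neg h2, dif_neg (by omega)]
      congr 1
      omega

lemma ext_pref_shift {A : Type*} (f : ℕ → A) (n : ℕ) :
    ext (pref f n) (fun k => f (n + k)) = f := by
  funext m
  simp only [ext, pref, List.length_ofFn]
  by_cases h : m < n
  · rw [dif_pos h]; simp [List.get_ofFn]
  · rw [dif_neg h]; congr 1; omega

lemma pref_ext {A : Type*} (s : List A) (g : ℕ → A) :
    pref (ext s g) s.length = s := by
  apply List.ext_get (by simp [pref])
  intro i h1 h2
  simp only [pref, List.get_ofFn, ext, Fin.coe_cast]
  rw [dif_pos h2]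

theorem cocontinuous_iff_monotone_verdict {A : Type*} [Fintype A] [Nonempty A]
    {D : Type*} [CompleteLattice D] (p : (ℕ → A) → D) :
    (∀ f : ℕ → A, p f = ⨆ n : ℕ, ⨅ g : ℕ → A, p (ext (pref f n) g)) ↔
    (∃ v : List A → D,
      (∀ s t : List A, s <+: t → v s ≤ v t) ∧
      ∀ f : ℕ → A, (⨆ n : ℕ, v (pref f n)) = p f) := by
  constructor
  · intro h
    refine ⟨fun s => ⨅ g : ℕ → A, p (ext s g), ?_, fun f => (h f).symm⟩
    intro s t ⟨u, hu⟩
    subst hu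
    refine le_iInf fun g => ?_
    rw [ext_append]
    exact iInf_le _ _
  · rintro ⟨v, hmono, hlim⟩ f
    apply le_antisymm
    · rw [← hlim f]
      refine iSup_mono fun n => ?_
      refine le_iInf fun g => ?_
      rw [← hlim (ext (pref f n) g)]
      refine le_trans ?_ (le_iSup _ n)
      have : pref (ext (pref f n) g) n = pref f n := by
        have := pref_ext (pref f n) g
        simpa [pref] using this
      rw [this]
    · refine iSup_le fun n => le_trans (iInf_le _ (fun k => f (n + k))) ?_
      rw [ext_pref_shift]
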